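/- (Fisher consistency, exponential loss, pointwise form) Let c₁, c₋₁ be nonzero reals with c₁ ≠ c₋₁ and consider g(α) = |c₁|·exp(−sgn(c₁)α) + |c₋₁|·exp(sgn(c₋₁)α). If c₁, c₋₁ > 0, then g is strictly convex, has a unique minimizer α* = (1/2)·log(c₁/c₋₁), and sgn(α*) = sgn(c₁ − c₋₁). -/

import Mathlib

/-- Fisher consistency, exponential loss, pointwise form: for
`c₁, c₋₁ > 0` with `c₁ ≠ c₋₁`, the function
`g(α) = |c₁|·exp(−sgn(c₁)α) + |c₋₁|·exp(sgn(c₋₁)α)` is strictly convex, has the unique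
minimizer `α⋆ = (1/2)·log(c₁/c₋₁)`, and `sgn(α⋆) = sgn(c₁ − c₋₁)`. -/
theorem fisher_consistency_exponential_pointwise
    (c1 cm1 : ℝ) (hc1 : 0 < c1) (hcm1 : 0 < cm1) (hne : c1 ≠ cm1)
    (g : ℝ → ℝ)
    (hg : ∀ α, g α = |c1| * Real.exp (-(Real.sign c1 * α))
                    + |cm1| * Real.exp (Real.sign cm1 * α)) :
    StrictConvexOn ℝ Set.univ g ∧
    (∀ α, g (Real.log (c1 / cm1) / 2) ≤ g α) ∧
    (∀ α, (∀ β, g α ≤ g β) → α = Real.log (c1 / cm1) / 2) ∧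
    Real.sign (Real.log (c1 / cm1) / 2) = Real.sign (c1 - cm1) := by
  have hs1 : Real.sign c1 = 1 := Real.sign_of_pos hc1
  have hs2 : Real.sign cm1 = 1 := Real.sign_of_pos hcm1
  have hg' : ∀ α, g α = c1 * Real.exp (-α) + cm1 * Real.exp α := by
    intro α; rw [hg, hs1, hs2, abs_of_pos hc1, abs_of_pos hcm1, one_mul]
  -- strict convexity
  have hsc : StrictConvexOn ℝ Set.univ g := by
    refine ⟨convex_univ, ?_⟩
    intro x _ y _ hxy a b ha hb hab
    have h1 := strictConvexOn_exp.2 (Set.mem_univ (-x)) (Set.mem_univ (-y))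
      (by simpa using hxy) ha hb hab
    have h2 := strictConvexOn_exp.2 (Set.mem_univ x) (Set.mem_univ y) hxy ha hb hab
    simp only [smul_eq_mul] at h1 h2 ⊢
    rw [hg', hg', hg']
    have hn : -(a * x + b * y) = a * (-x) + b * (-y) := by ring
    rw [hn]
    nlinarith [mul_lt_mul_of_pos_left h1 hc1, mul_lt_mul_of_pos_left h2 hcm1]
  set L : ℝ := Real.log (c1 / cm1) with hL
  have hr : (0:ℝ) < c1 / cm1 := div_pos hc1 hcm1
  have hexp : Real.exp (L / 2) = Real.sqrt (c1 / cm1) := by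
    rw [Real.sqrt_eq_rpow, Real.rpow_def_of_pos hr, hL, div_eq_mul_inv]
    ring_nf
  have hexpneg : Real.exp (-(L / 2)) = Real.sqrt (cm1 / c1) := by
    rw [Real.exp_neg, hexp, ← Real.sqrt_inv, inv_div]
  have e1 : c1 * Real.sqrt (cm1 / c1) = Real.sqrt (c1 * cm1) := by
    conv_lhs => rw [← Real.sqrt_sq hc1.le]
    rw [← Real.sqrt_mul (sq_nonneg c1)]
    congr 1
    field_simp
    ring
    exact (Real.sqrt_sq hc1.le).symm
  have e2 : cm1 * Real.sqrt (c1 / cm1) = Real.sqrt (c1 * cm1) := by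
    conv_lhs => rw [← Real.sqrt_sq hcm1.le]
    rw [← Real.sqrt_mul (sq_nonneg cm1)]
    congr 1
    field_simp
    ring
    exact (Real.sqrt_sq hcm1.le).symm
  have hval : g (L / 2) = 2 * Real.sqrt (c1 * cm1) := by
    rw [hg', hexp, hexpneg, e1, e2]; ring
  have hmin : ∀ α, g (L / 2) ≤ g α := by
    intro α
    rw [hval, hg' α]
    set u := Real.exp (-α) with hu'
    set v := Real.exp α with hv'
    have hu : 0 < u := Real.exp_pos _
    have hv : 0 < v := Real.exp_pos _
    have huv : u * v = 1 := by rw [hu', hv', ← Real.exp_add]; simp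
    set s := Real.sqrt (c1 * cm1) with hs'
    have hs0 : 0 ≤ s := Real.sqrt_nonneg _
    have hs2' : s ^ 2 = c1 * cm1 := Real.sq_sqrt (by positivity)
    nlinarith [sq_nonneg (c1 * u - s), mul_pos hu hv, mul_pos hc1 hu,
      mul_pos hcm1 hv, mul_nonneg hs0 hu.le]
  refine ⟨hsc, hmin, ?_, ?_⟩
  · intro α hm
    by_contra hne'
    have hlt := hsc.2 (Set.mem_univ α) (Set.mem_univ (L / 2)) hne'
      (by norm_num : (0:ℝ) < 1/2) (by norm_num : (0:ℝ) < 1/2) (by norm_num)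
    have h1 : g α ≤ g ((1/2 : ℝ) • α + (1/2 : ℝ) • (L / 2)) := hm _
    have h2 : g α ≤ g (L / 2) := hm _
    have h3 : g (L / 2) ≤ g α := hmin α
    simp only [smul_eq_mul] at hlt h1
    linarith
  · rcases lt_or_gt_of_ne hne with h | h
    · have hL0 : L < 0 := Real.log_neg hr ((div_lt_one hcm1).2 h)
      rw [Real.sign_of_neg (by linarith), Real.sign_of_neg (by linarith)]
    · have hL0 : 0 < L := Real.log_pos ((one_lt_div hcm1).2 h)
      rw [Real.sign_of_pos (by linarith), Real.sign_of_pos (by linarith)]
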